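/- Cumulative suboptimality of hybrid actor-critic under NPG coverage (deterministic form of the no-Bellman-completeness case of Theorem 4.5): Let |A| = A ≥ 2, T ≥ 4·log(A), and η = (1−γ)·√(log(A)/T). Let f^1, …, f^T : S×A → [0, 1/(1−γ)], and let the policies π^1, …, π^T be generated by π^1(·|s) uniform on A and π^{t+1}(a|s) = π^t(a|s)·exp(η f^t(s,a)) / Σ_{a'} π^t(a'|s)·exp(η f^t(s,a')). Suppose for every t: E_{d^{π^t}}[(f^t − Q^{π^t})²] ≤ Δ_on, and the comparator policy π^e satisfies d^{π^e}(s,a) ≤ C·d^{π^t}(s,a) for all (s,a), with C ≥ 0. Then Σ_{t=1}^T (V^{π^e} − V^{π^t}) ≤ (2/(1−γ)²)·√(log(A)·T) + (2·T/(1−γ))·√(C·Δ_on). -/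

import Mathlib

open Finset

structure FinMDP (S A : Type*) [Fintype S] [Fintype A] where
  P : S → A → S → ℝ
  P_nonneg : ∀ s a s', 0 ≤ P s a s'
  P_sum : ∀ s a, ∑ s', P s a s' = 1
  r : S → A → ℝ
  r_nonneg : ∀ s a, 0 ≤ r s a
  r_le_one : ∀ s a, r s a ≤ 1
  disc : ℝ
  disc_pos : 0 < disc
  disc_lt_one : disc < 1
  init : S → ℝ
  init_nonneg : ∀ s, 0 ≤ init s
  init_sum : ∑ s, init s = 1

variable {S A : Type*} [Fintype S] [Fintype A] [Nonempty S] [Nonempty A]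

/-- A policy assigns to each state a probability mass function over actions. -/
def IsPolicy (π : S → A → ℝ) : Prop :=
  (∀ s a, 0 ≤ π s a) ∧ ∀ s, ∑ a, π s a = 1

/-- The Bellman operator `T^π`. -/
noncomputable def FinMDP.bellman (M : FinMDP S A) (π f : S → A → ℝ) (s : S) (a : A) : ℝ :=
  M.r s a + M.disc * ∑ s', M.P s a s' * ∑ a', π s' a' * f s' a'

/-- `Q` is the action-value function of `π`, i.e. satisfies the Bellman equation. -/
def FinMDP.IsQ (M : FinMDP S A) (π Q : S → A → ℝ) : Prop :=
  ∀ s a, Q s a = M.bellman π Q s a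

/-- The state value `V^π(s)` induced by a `Q`-function. -/
noncomputable def vOf (π Q : S → A → ℝ) (s : S) : ℝ := ∑ a, π s a * Q s a

/-- The scalar value `V^π = E_{s ∼ μ₀}[V^π(s)]`. -/
noncomputable def FinMDP.scalarV (M : FinMDP S A) (π Q : S → A → ℝ) : ℝ :=
  ∑ s, M.init s * vOf π Q s

/-- Distribution of the state at time `t` under policy `π`. -/
noncomputable def FinMDP.stateDist (M : FinMDP S A) (π : S → A → ℝ) : ℕ → S → ℝ
  | 0 => M.init
  | (t + 1) => fun s' => ∑ s, ∑ a, FinMDP.stateDist M π t s * π s a * M.P s a s'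

/-- The discounted occupancy measure `d^π(s,a) = (1-γ) ∑_t γ^t Pr^π(s_t = s, a_t = a)`. -/
noncomputable def FinMDP.occ (M : FinMDP S A) (π : S → A → ℝ) (s : S) (a : A) : ℝ :=
  (1 - M.disc) * ∑' t : ℕ, M.disc ^ t * M.stateDist π t s * π s a

set_option linter.unusedSectionVars false
set_option linter.unusedVariables false
set_option maxHeartbeats 1000000


-- Cauchy-Schwarz helper
lemma cs_aux {ι : Type*} [Fintype ι] (w h : ι → ℝ) (hw : ∀ i, 0 ≤ w i)
    (hw1 : ∑ i, w i = 1) {D : ℝ} (hD : ∑ i, w i * (h i) ^ 2 ≤ D) :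
    ∑ i, w i * h i ≤ Real.sqrt D := by
  have key : (∑ i, w i * h i) ^ 2 ≤ D := by
    have h1 : (∑ i, Real.sqrt (w i) * (Real.sqrt (w i) * h i)) ^ 2
        ≤ (∑ i, Real.sqrt (w i) ^ 2) * (∑ i, (Real.sqrt (w i) * h i) ^ 2) :=
      sum_mul_sq_le_sq_mul_sq _ _ _
    have e1 : ∀ i, Real.sqrt (w i) * (Real.sqrt (w i) * h i) = w i * h i := by
      intro i; rw [← mul_assoc, Real.mul_self_sqrt (hw i)]
    have e2 : ∀ i, Real.sqrt (w i) ^ 2 = w i := fun i => Real.sq_sqrt (hw i)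
    have e3 : ∀ i, (Real.sqrt (w i) * h i) ^ 2 = w i * h i ^ 2 := by
      intro i; rw [mul_pow, e2]
    simp only [e1, e2, e3] at h1
    rw [hw1, one_mul] at h1
    exact h1.trans hD
  calc ∑ i, w i * h i ≤ |∑ i, w i * h i| := le_abs_self _
    _ = Real.sqrt ((∑ i, w i * h i) ^ 2) := (Real.sqrt_sq_eq_abs _).symm
    _ ≤ Real.sqrt D := Real.sqrt_le_sqrt key

lemma exp_quad {x : ℝ} (h0 : 0 ≤ x) (h1 : x ≤ 1) : Real.exp x ≤ 1 + x + x ^ 2 := by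
  have := Real.abs_exp_sub_one_sub_id_le (x := x) (by rw [abs_of_nonneg h0]; exact h1)
  have := (abs_le.1 this).2
  linarith

lemma stateDist_nonneg (M : FinMDP S A) {π : S → A → ℝ} (hπ : ∀ s a, 0 ≤ π s a)
    (t : ℕ) (s : S) : 0 ≤ M.stateDist π t s := by
  induction t generalizing s with
  | zero => exact M.init_nonneg s
  | succ t ih =>
    refine Finset.sum_nonneg fun s' _ => Finset.sum_nonneg fun a _ => ?_
    exact mul_nonneg (mul_nonneg (ih s') (hπ s' a)) (M.P_nonneg s' a s)

lemma stateDist_sum (M : FinMDP S A) {π : S → A → ℝ} (hπ : IsPolicy π) (t : ℕ) :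
    ∑ s, M.stateDist π t s = 1 := by
  induction t with
  | zero => exact M.init_sum
  | succ t ih =>
    show ∑ s', ∑ s, ∑ a, M.stateDist π t s * π s a * M.P s a s' = 1
    rw [Finset.sum_comm]
    have : ∀ s, ∑ s', ∑ a, M.stateDist π t s * π s a * M.P s a s'
        = M.stateDist π t s := by
      intro s
      rw [Finset.sum_comm]
      have : ∀ a, ∑ s', M.stateDist π t s * π s a * M.P s a s'
          = M.stateDist π t s * π s a := by
        intro a; rw [← Finset.mul_sum, M.P_sum, mul_one]
      simp only [this, ← Finset.mul_sum, hπ.2 s, mul_one]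
    simp only [this, ih]

lemma stateDist_le_one (M : FinMDP S A) {π : S → A → ℝ} (hπ : IsPolicy π) (t : ℕ) (s : S) :
    M.stateDist π t s ≤ 1 := by
  have := Finset.single_le_sum (f := fun s => M.stateDist π t s)
    (fun s _ => stateDist_nonneg M hπ.1 t s) (Finset.mem_univ s)
  rw [stateDist_sum M hπ t] at this
  exact this

lemma sd_summable (M : FinMDP S A) {π : S → A → ℝ} (hπ : IsPolicy π) (s : S) :
    Summable (fun t : ℕ => M.disc ^ t * M.stateDist π t s) := by
  refine Summable.of_nonneg_of_le
    (fun t => mul_nonneg (pow_nonneg M.disc_pos.le t) (stateDist_nonneg M hπ.1 t s))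
    (fun t => ?_) (summable_geometric_of_lt_one M.disc_pos.le M.disc_lt_one)
  calc M.disc ^ t * M.stateDist π t s ≤ M.disc ^ t * 1 :=
        mul_le_mul_of_nonneg_left (stateDist_le_one M hπ t s) (pow_nonneg M.disc_pos.le t)
    _ = M.disc ^ t := mul_one _

noncomputable def sdist (M : FinMDP S A) (π : S → A → ℝ) (s : S) : ℝ :=
  ∑' t : ℕ, M.disc ^ t * M.stateDist π t s

lemma occ_eq (M : FinMDP S A) (π : S → A → ℝ) (s : S) (a : A) :
    M.occ π s a = (1 - M.disc) * sdist M π s * π s a := by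
  unfold FinMDP.occ sdist
  rw [tsum_mul_right, mul_assoc]

lemma sdist_nonneg (M : FinMDP S A) {π : S → A → ℝ} (hπ : ∀ s a, 0 ≤ π s a) (s : S) :
    0 ≤ sdist M π s :=
  tsum_nonneg fun t => mul_nonneg (pow_nonneg M.disc_pos.le t) (stateDist_nonneg M hπ t s)

lemma sdist_sum (M : FinMDP S A) {π : S → A → ℝ} (hπ : IsPolicy π) :
    ∑ s, sdist M π s = 1 / (1 - M.disc) := by
  unfold sdist
  rw [← Summable.tsum_finsetSum (fun s _ => sd_summable M hπ s)]
  have : ∀ t : ℕ, ∑ s, M.disc ^ t * M.stateDist π t s = M.disc ^ t := by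
    intro t; rw [← Finset.mul_sum, stateDist_sum M hπ t, mul_one]
  rw [tsum_congr this, tsum_geometric_of_lt_one M.disc_pos.le M.disc_lt_one, one_div]

lemma sdist_flow (M : FinMDP S A) {π : S → A → ℝ} (hπ : IsPolicy π) (s' : S) :
    sdist M π s' = M.init s' + M.disc * ∑ s, ∑ a, sdist M π s * π s a * M.P s a s' := by
  have hsum := sd_summable M hπ (s := s')
  unfold sdist
  rw [Summable.tsum_eq_zero_add hsum]
  congr 1
  · simp [FinMDP.stateDist]
  · -- ∑' t, disc^(t+1) * stateDist π (t+1) s' = disc * ∑ s, ∑ a, sdist * π * P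
    have e1 : ∀ t : ℕ, M.disc ^ (t + 1) * M.stateDist π (t + 1) s'
        = ∑ s, ∑ a, (M.disc ^ t * M.stateDist π t s) * (M.disc * (π s a * M.P s a s')) := by
      intro t
      show M.disc ^ (t+1) * (∑ s, ∑ a, M.stateDist π t s * π s a * M.P s a s') = _
      rw [Finset.mul_sum]
      refine Finset.sum_congr rfl fun s _ => ?_
      rw [Finset.mul_sum]
      refine Finset.sum_congr rfl fun a _ => ?_
      ring
    rw [tsum_congr e1]
    have hsummable : ∀ s ∈ Finset.univ, ∀ a ∈ Finset.univ,
        Summable (fun t : ℕ => (M.disc ^ t * M.stateDist π t s) * (M.disc * (π s a * M.P s a s'))) :=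
      fun s _ a _ => (sd_summable M hπ s).mul_right _
    rw [Summable.tsum_finsetSum (fun s _ => summable_sum (fun a _ => hsummable s (Finset.mem_univ s) a (Finset.mem_univ a)))]
    rw [Finset.mul_sum]
    refine Finset.sum_congr rfl fun s _ => ?_
    rw [Summable.tsum_finsetSum (fun a _ => hsummable s (Finset.mem_univ s) a (Finset.mem_univ a))]
    rw [Finset.mul_sum]
    refine Finset.sum_congr rfl fun a _ => ?_
    rw [tsum_mul_right]
    show sdist M π s * (M.disc * (π s a * M.P s a s')) = M.disc * (sdist M π s * π s a * M.P s a s')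
    ring

lemma weighted_bellman (M : FinMDP S A) {πe : S → A → ℝ} (hπe : IsPolicy πe)
    {ρ Qρ : S → A → ℝ} (hQρ : M.IsQ ρ Qρ) :
    ∑ s, sdist M πe s * (∑ a, πe s a * Qρ s a)
      = ∑ s, sdist M πe s * (∑ a, πe s a * M.r s a)
        + ∑ s, (sdist M πe s - M.init s) * vOf ρ Qρ s := by
  have flow' : ∀ s', sdist M πe s' - M.init s'
      = M.disc * ∑ s, ∑ a, sdist M πe s * πe s a * M.P s a s' := by
    intro s'; rw [sdist_flow M hπe s']; ring
  have key : ∀ s', (sdist M πe s' - M.init s') * vOf ρ Qρ s'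
      = ∑ s, ∑ a, M.disc * (sdist M πe s * πe s a * (M.P s a s' * vOf ρ Qρ s')) := by
    intro s'
    rw [flow']
    simp only [Finset.sum_mul, Finset.mul_sum]
    refine Finset.sum_congr rfl fun s _ => Finset.sum_congr rfl fun a _ => ?_
    ring
  have key2 : ∑ s', (sdist M πe s' - M.init s') * vOf ρ Qρ s'
      = ∑ s, ∑ a, M.disc * (sdist M πe s * πe s a * ∑ s', M.P s a s' * vOf ρ Qρ s') := by
    rw [Finset.sum_congr rfl (fun s' _ => key s'), Finset.sum_comm]
    refine Finset.sum_congr rfl fun s _ => ?_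
    rw [Finset.sum_comm]
    refine Finset.sum_congr rfl fun a _ => ?_
    rw [Finset.mul_sum, Finset.mul_sum]
  rw [key2]
  rw [← Finset.sum_add_distrib]
  refine Finset.sum_congr rfl fun s _ => ?_
  have expand : ∀ a, πe s a * Qρ s a
      = πe s a * M.r s a + πe s a * (M.disc * ∑ s', M.P s a s' * vOf ρ Qρ s') := by
    intro a
    rw [hQρ s a]
    unfold FinMDP.bellman
    rw [mul_add]
    rfl
  rw [Finset.sum_congr rfl (fun a _ => expand a), Finset.sum_add_distrib, mul_add]
  congr 1
  rw [Finset.mul_sum]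
  exact Finset.sum_congr rfl fun a _ => by ring

lemma value_identity (M : FinMDP S A) {πe Qe : S → A → ℝ} (hπe : IsPolicy πe)
    (hQe : M.IsQ πe Qe) :
    M.scalarV πe Qe = ∑ s, sdist M πe s * (∑ a, πe s a * M.r s a) := by
  have h := weighted_bellman M hπe hQe
  have : ∀ s, sdist M πe s * (∑ a, πe s a * Qe s a) = sdist M πe s * vOf πe Qe s := by
    intro s; rfl
  rw [Finset.sum_congr rfl (fun s _ => this s)] at h
  have h2 : ∀ s, (sdist M πe s - M.init s) * vOf πe Qe s
      = sdist M πe s * vOf πe Qe s - M.init s * vOf πe Qe s := fun s => by ring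
  rw [Finset.sum_congr rfl (fun s _ => h2 s), Finset.sum_sub_distrib] at h
  unfold FinMDP.scalarV
  linarith

lemma pdl (M : FinMDP S A) {πe Qe : S → A → ℝ} (hπe : IsPolicy πe) (hQe : M.IsQ πe Qe)
    {ρ Qρ : S → A → ℝ} (hQρ : M.IsQ ρ Qρ) :
    M.scalarV πe Qe - M.scalarV ρ Qρ
      = ∑ s, sdist M πe s * ((∑ a, πe s a * Qρ s a) - vOf ρ Qρ s) := by
  have h := weighted_bellman M hπe hQρ
  rw [value_identity M hπe hQe]
  have h2 : ∀ s, (sdist M πe s - M.init s) * vOf ρ Qρ s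
      = sdist M πe s * vOf ρ Qρ s - M.init s * vOf ρ Qρ s := fun s => by ring
  rw [Finset.sum_congr rfl (fun s _ => h2 s), Finset.sum_sub_distrib] at h
  have h3 : ∀ s, sdist M πe s * ((∑ a, πe s a * Qρ s a) - vOf ρ Qρ s)
      = sdist M πe s * (∑ a, πe s a * Qρ s a) - sdist M πe s * vOf ρ Qρ s := fun s => by ring
  rw [Finset.sum_congr rfl (fun s _ => h3 s), Finset.sum_sub_distrib]
  unfold FinMDP.scalarV
  linarith

section Hedge
variable {A : Type*} [Fintype A] [Nonempty A]

noncomputable def hedgeW (η : ℝ) (g : ℕ → A → ℝ) (t : ℕ) : ℝ :=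
  ∑ a, ((Fintype.card A : ℝ))⁻¹ * Real.exp (η * ∑ u ∈ Icc 1 t, g u a)

lemma cardA_pos : (0 : ℝ) < (Fintype.card A : ℝ) := by
  exact_mod_cast Fintype.card_pos

lemma hedgeW_pos (η : ℝ) (g : ℕ → A → ℝ) (t : ℕ) : 0 < hedgeW η g t := by
  refine Finset.sum_pos (fun a _ => mul_pos (inv_pos.2 cardA_pos) (Real.exp_pos _)) ?_
  exact univ_nonempty

lemma hedgeW_zero (η : ℝ) (g : ℕ → A → ℝ) : hedgeW η g 0 = 1 := by
  unfold hedgeW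
  have h0 : Icc 1 0 = (∅ : Finset ℕ) := by simp
  simp only [h0, Finset.sum_empty, mul_zero, Real.exp_zero, mul_one, Finset.sum_const,
    Finset.card_univ, nsmul_eq_mul]
  rw [mul_inv_cancel₀ (ne_of_gt (cardA_pos (A := A)))]

lemma hedge_rep (T : ℕ) (η : ℝ) (g : ℕ → A → ℝ) (p : ℕ → A → ℝ)
    (hp1 : ∀ a, p 1 a = 1 / (Fintype.card A : ℝ))
    (hupd : ∀ t, 1 ≤ t → t < T → ∀ a,
      p (t + 1) a = p t a * Real.exp (η * g t a) / ∑ a', p t a' * Real.exp (η * g t a')) :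
    ∀ k, k < T → ∀ a, p (k + 1) a
      = ((Fintype.card A : ℝ))⁻¹ * Real.exp (η * ∑ u ∈ Icc 1 k, g u a) / hedgeW η g k := by
  intro k
  induction k with
  | zero =>
    intro _ a
    have : Icc 1 0 = (∅ : Finset ℕ) := by simp
    rw [hp1 a, this]
    simp [hedgeW_zero]
  | succ k ih =>
    intro hk a
    have hkT : k < T := Nat.lt_of_succ_lt hk
    have hrep := ih hkT
    have hIcc : Icc 1 (k + 1) = insert (k + 1) (Icc 1 k) := by
      exact (Finset.insert_Icc_right_eq_Icc_add_one (Nat.succ_le_succ (Nat.zero_le k))).symm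
    have hnotmem : k + 1 ∉ Icc 1 k := by simp
    have hexp : ∀ b, Real.exp (η * ∑ u ∈ Icc 1 (k+1), g u b)
        = Real.exp (η * ∑ u ∈ Icc 1 k, g u b) * Real.exp (η * g (k+1) b) := by
      intro b
      rw [hIcc, Finset.sum_insert hnotmem, ← Real.exp_add]
      ring_nf
    have hnum : ∀ b, p (k+1) b * Real.exp (η * g (k+1) b)
        = ((Fintype.card A : ℝ))⁻¹ * Real.exp (η * ∑ u ∈ Icc 1 (k+1), g u b) / hedgeW η g k := by
      intro b
      rw [hrep b, hexp b]
      ring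
    have hZ : ∑ a', p (k+1) a' * Real.exp (η * g (k+1) a')
        = hedgeW η g (k+1) / hedgeW η g k := by
      rw [Finset.sum_congr rfl (fun b _ => hnum b)]
      rw [← Finset.sum_div]
      rfl
    rw [hupd (k+1) (Nat.succ_le_succ (Nat.zero_le k)) hk a, hnum a, hZ]
    have h1 : hedgeW η g k ≠ 0 := ne_of_gt (hedgeW_pos η g k)
    have h2 : hedgeW η g (k+1) ≠ 0 := ne_of_gt (hedgeW_pos η g (k+1))
    field_simp

lemma hedge_policy (T : ℕ) (η : ℝ) (g : ℕ → A → ℝ) (p : ℕ → A → ℝ)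
    (hp1 : ∀ a, p 1 a = 1 / (Fintype.card A : ℝ))
    (hupd : ∀ t, 1 ≤ t → t < T → ∀ a,
      p (t + 1) a = p t a * Real.exp (η * g t a) / ∑ a', p t a' * Real.exp (η * g t a')) :
    ∀ t, 1 ≤ t → t ≤ T → (∀ a, 0 ≤ p t a) ∧ ∑ a, p t a = 1 := by
  intro t ht1 htT
  obtain ⟨k, rfl⟩ := Nat.exists_eq_add_of_le ht1
  rw [Nat.add_comm] at *
  have hrep := hedge_rep T η g p hp1 hupd k (by omega)
  constructor
  · intro a
    rw [hrep a]
    exact div_nonneg (by positivity) (hedgeW_pos η g k).le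
  · rw [Finset.sum_congr rfl (fun a _ => hrep a), ← Finset.sum_div]
    show hedgeW η g k / hedgeW η g k = 1
    exact div_self (ne_of_gt (hedgeW_pos η g k))

lemma hedge_regret (T : ℕ) (η B : ℝ) (hη : 0 < η) (hB : 0 ≤ B) (hηB : η * B ≤ 1)
    (g : ℕ → A → ℝ) (hg : ∀ t ∈ Icc 1 T, ∀ a, 0 ≤ g t a ∧ g t a ≤ B)
    (p : ℕ → A → ℝ)
    (hp1 : ∀ a, p 1 a = 1 / (Fintype.card A : ℝ))
    (hupd : ∀ t, 1 ≤ t → t < T → ∀ a,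
      p (t + 1) a = p t a * Real.exp (η * g t a) / ∑ a', p t a' * Real.exp (η * g t a'))
    (q : A → ℝ) (hq : ∀ a, 0 ≤ q a) (hq1 : ∑ a, q a = 1) :
    ∑ t ∈ Icc 1 T, ∑ a, (q a - p t a) * g t a
      ≤ Real.log (Fintype.card A) / η + η * T * B ^ 2 := by
  -- per-step bound on log increments
  have step : ∀ k, k < T →
      Real.log (hedgeW η g (k+1)) - Real.log (hedgeW η g k)
        ≤ η * ∑ a, p (k+1) a * g (k+1) a + η ^ 2 * B ^ 2 := by
    intro k hk
    have hrep := hedge_rep T η g p hp1 hupd k hk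
    have hpol := hedge_policy T η g p hp1 hupd (k+1) (Nat.succ_le_succ (Nat.zero_le k))
      (Nat.succ_le_of_lt hk)
    have hIcc : Icc 1 (k + 1) = insert (k + 1) (Icc 1 k) := by
      exact (Finset.insert_Icc_right_eq_Icc_add_one (Nat.succ_le_succ (Nat.zero_le k))).symm
    have hmem : k + 1 ∈ Icc 1 T := by simp; omega
    have hZ : hedgeW η g (k+1) = hedgeW η g k * ∑ a, p (k+1) a * Real.exp (η * g (k+1) a) := by
      have hnum : ∀ b, p (k+1) b * Real.exp (η * g (k+1) b)
          = ((Fintype.card A : ℝ))⁻¹ * Real.exp (η * ∑ u ∈ Icc 1 (k+1), g u b) / hedgeW η g k := by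
        intro b
        rw [hrep b, hIcc, Finset.sum_insert (by simp), mul_add, Real.exp_add]
        ring
      rw [Finset.sum_congr rfl (fun b _ => hnum b), ← Finset.sum_div]
      rw [mul_div_cancel₀ _ (ne_of_gt (hedgeW_pos η g k))]
      rfl
    have hZbound : ∑ a, p (k+1) a * Real.exp (η * g (k+1) a)
        ≤ 1 + (η * ∑ a, p (k+1) a * g (k+1) a + η ^ 2 * B ^ 2) := by
      have hterm : ∀ a, p (k+1) a * Real.exp (η * g (k+1) a)
          ≤ p (k+1) a * (1 + η * g (k+1) a + η ^ 2 * B ^ 2) := by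
        intro a
        refine mul_le_mul_of_nonneg_left ?_ (hpol.1 a)
        have hga := (hg (k+1) hmem a).1
        have hgb := (hg (k+1) hmem a).2
        have h0 : 0 ≤ η * g (k+1) a := mul_nonneg hη.le hga
        have h1 : η * g (k+1) a ≤ 1 := le_trans (mul_le_mul_of_nonneg_left hgb hη.le) hηB
        have := exp_quad h0 h1
        have hsq : (η * g (k+1) a) ^ 2 ≤ η ^ 2 * B ^ 2 := by
          rw [mul_pow]
          exact mul_le_mul_of_nonneg_left (pow_le_pow_left₀ hga hgb 2) (sq_nonneg η)
        linarith
      calc ∑ a, p (k+1) a * Real.exp (η * g (k+1) a)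
          ≤ ∑ a, p (k+1) a * (1 + η * g (k+1) a + η ^ 2 * B ^ 2) :=
            Finset.sum_le_sum fun a _ => hterm a
        _ = 1 + (η * ∑ a, p (k+1) a * g (k+1) a + η ^ 2 * B ^ 2) := by
            have e : ∀ a, p (k+1) a * (1 + η * g (k+1) a + η ^ 2 * B ^ 2)
                = p (k+1) a + η * (p (k+1) a * g (k+1) a) + p (k+1) a * (η ^ 2 * B ^ 2) :=
              fun a => by ring
            rw [Finset.sum_congr rfl fun a _ => e a, Finset.sum_add_distrib,
              Finset.sum_add_distrib, ← Finset.mul_sum, ← Finset.sum_mul, hpol.2, one_mul]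
            ring
    have hZpos : 0 < ∑ a, p (k+1) a * Real.exp (η * g (k+1) a) := by
      have h2 : ∑ a, p (k+1) a * Real.exp (η * g (k+1) a)
          = hedgeW η g (k+1) / hedgeW η g k := by
        rw [hZ, mul_comm (hedgeW η g k), mul_div_assoc, div_self (ne_of_gt (hedgeW_pos η g k)), mul_one]
      rw [h2]
      exact div_pos (hedgeW_pos η g (k+1)) (hedgeW_pos η g k)
    have hlog : Real.log (hedgeW η g (k+1)) - Real.log (hedgeW η g k)
        = Real.log (∑ a, p (k+1) a * Real.exp (η * g (k+1) a)) := by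
      rw [hZ, Real.log_mul (ne_of_gt (hedgeW_pos η g k)) (ne_of_gt hZpos)]
      ring
    rw [hlog]
    calc Real.log (∑ a, p (k+1) a * Real.exp (η * g (k+1) a))
        ≤ (∑ a, p (k+1) a * Real.exp (η * g (k+1) a)) - 1 :=
          Real.log_le_sub_one_of_pos hZpos
      _ ≤ η * ∑ a, p (k+1) a * g (k+1) a + η ^ 2 * B ^ 2 := by linarith
  -- telescope
  have tele : Real.log (hedgeW η g T)
      = ∑ k ∈ Finset.range T, (Real.log (hedgeW η g (k+1)) - Real.log (hedgeW η g k)) := by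
    rw [Finset.sum_range_sub (fun k => Real.log (hedgeW η g k))]
    rw [hedgeW_zero, Real.log_one, sub_zero]
  have upper : Real.log (hedgeW η g T)
      ≤ ∑ k ∈ Finset.range T, (η * ∑ a, p (k+1) a * g (k+1) a) + T * (η ^ 2 * B ^ 2) := by
    rw [tele]
    calc ∑ k ∈ Finset.range T, (Real.log (hedgeW η g (k+1)) - Real.log (hedgeW η g k))
        ≤ ∑ k ∈ Finset.range T, (η * ∑ a, p (k+1) a * g (k+1) a + η ^ 2 * B ^ 2) :=
          Finset.sum_le_sum fun k hk => step k (Finset.mem_range.1 hk)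
      _ = _ := by rw [Finset.sum_add_distrib, Finset.sum_const, Finset.card_range,
            nsmul_eq_mul]
  -- lower bound
  obtain ⟨a₀, -, ha₀⟩ := Finset.exists_max_image Finset.univ
    (fun a => ∑ u ∈ Icc 1 T, g u a) ⟨Classical.arbitrary A, Finset.mem_univ _⟩
  have lower : η * ∑ a, q a * (∑ u ∈ Icc 1 T, g u a) - Real.log (Fintype.card A)
      ≤ Real.log (hedgeW η g T) := by
    have h1 : ((Fintype.card A : ℝ))⁻¹ * Real.exp (η * ∑ u ∈ Icc 1 T, g u a₀)
        ≤ hedgeW η g T :=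
      Finset.single_le_sum (f := fun a => ((Fintype.card A : ℝ))⁻¹ *
        Real.exp (η * ∑ u ∈ Icc 1 T, g u a))
        (fun a _ => by positivity) (Finset.mem_univ a₀)
    have h2 : Real.log (((Fintype.card A : ℝ))⁻¹ * Real.exp (η * ∑ u ∈ Icc 1 T, g u a₀))
        = η * (∑ u ∈ Icc 1 T, g u a₀) - Real.log (Fintype.card A) := by
      rw [Real.log_mul (by positivity) (ne_of_gt (Real.exp_pos _)), Real.log_inv,
        Real.log_exp]
      ring
    have h3 : ∑ a, q a * (∑ u ∈ Icc 1 T, g u a) ≤ ∑ u ∈ Icc 1 T, g u a₀ := by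
      calc ∑ a, q a * (∑ u ∈ Icc 1 T, g u a)
          ≤ ∑ a, q a * (∑ u ∈ Icc 1 T, g u a₀) :=
            Finset.sum_le_sum fun a _ => mul_le_mul_of_nonneg_left (ha₀ a (Finset.mem_univ a)) (hq a)
        _ = ∑ u ∈ Icc 1 T, g u a₀ := by rw [← Finset.sum_mul, hq1, one_mul]
    have h4 := Real.log_le_log (by positivity) h1
    rw [h2] at h4
    have h5 : η * ∑ a, q a * (∑ u ∈ Icc 1 T, g u a) ≤ η * ∑ u ∈ Icc 1 T, g u a₀ :=
      mul_le_mul_of_nonneg_left h3 hη.le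
    linarith
  -- combine
  have hshift : ∑ t ∈ Icc 1 T, ∑ a, p t a * g t a
      = ∑ k ∈ Finset.range T, ∑ a, p (k+1) a * g (k+1) a := by
    rw [show Icc 1 T = Ico 1 (T+1) from (Finset.Ico_add_one_right_eq_Icc 1 T).symm,
      Finset.sum_Ico_eq_sum_range]
    simp only [Nat.add_sub_cancel]
    exact Finset.sum_congr rfl fun i _ => by rw [Nat.add_comm]
  have hqswap : ∑ t ∈ Icc 1 T, ∑ a, q a * g t a = ∑ a, q a * (∑ u ∈ Icc 1 T, g u a) := by
    rw [Finset.sum_comm]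
    exact Finset.sum_congr rfl fun a _ => by rw [Finset.mul_sum]
  have main : η * (∑ t ∈ Icc 1 T, ∑ a, (q a - p t a) * g t a)
      ≤ Real.log (Fintype.card A) + η ^ 2 * (T * B ^ 2) := by
    have expand : ∑ t ∈ Icc 1 T, ∑ a, (q a - p t a) * g t a
        = (∑ t ∈ Icc 1 T, ∑ a, q a * g t a) - ∑ t ∈ Icc 1 T, ∑ a, p t a * g t a := by
      rw [← Finset.sum_sub_distrib]
      refine Finset.sum_congr rfl fun t _ => ?_
      rw [← Finset.sum_sub_distrib]
      exact Finset.sum_congr rfl fun a _ => by ring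
    rw [expand, hqswap, hshift]
    have hsum : ∑ k ∈ Finset.range T, (η * ∑ a, p (k+1) a * g (k+1) a)
        = η * ∑ k ∈ Finset.range T, ∑ a, p (k+1) a * g (k+1) a := by
      rw [Finset.mul_sum]
    nlinarith [lower, upper]
  -- divide by η
  have hb : ∑ t ∈ Icc 1 T, ∑ a, (q a - p t a) * g t a
      ≤ (Real.log (Fintype.card A) + η ^ 2 * (T * B ^ 2)) / η := by
    rw [le_div_iff₀ hη]
    linarith [main]
  calc ∑ t ∈ Icc 1 T, ∑ a, (q a - p t a) * g t a
      ≤ (Real.log (Fintype.card A) + η ^ 2 * (T * B ^ 2)) / η := hb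
    _ = Real.log (Fintype.card A) / η + η * T * B ^ 2 := by
        field_simp

end Hedge


lemma cs_aux2 {S A : Type*} [Fintype S] [Fintype A] (w h : S → A → ℝ)
    (hw : ∀ s a, 0 ≤ w s a) (hw1 : ∑ s, ∑ a, w s a = 1) {D : ℝ}
    (hD : ∑ s, ∑ a, w s a * (h s a) ^ 2 ≤ D) :
    ∑ s, ∑ a, w s a * h s a ≤ Real.sqrt D := by
  have key := cs_aux (fun p : S × A => w p.1 p.2) (fun p : S × A => h p.1 p.2)
    (fun p => hw p.1 p.2) (by rw [Fintype.sum_prod_type]; exact hw1)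
    (D := D) (by rw [Fintype.sum_prod_type]; exact hD)
  rw [Fintype.sum_prod_type] at key
  exact key

/-- Cumulative suboptimality of hybrid actor-critic under NPG coverage
(deterministic form of the no-Bellman-completeness case of Theorem 4.5). -/
theorem stmt16 (M : FinMDP S A) (hA : 2 ≤ Fintype.card A) (T : ℕ)
    (hT : 4 * Real.log (Fintype.card A) ≤ (T : ℝ))
    (η : ℝ) (hη : η = (1 - M.disc) * Real.sqrt (Real.log (Fintype.card A) / T))
    (f : ℕ → S → A → ℝ)
    (hfmem : ∀ t ∈ Finset.Icc 1 T, ∀ s a, f t s a ∈ Set.Icc 0 (1 / (1 - M.disc)))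
    (π : ℕ → S → A → ℝ)
    (hπ1 : ∀ s a, π 1 s a = 1 / Fintype.card A)
    (hupd : ∀ t, 1 ≤ t → t < T → ∀ s a,
      π (t + 1) s a =
        π t s a * Real.exp (η * f t s a) / ∑ a', π t s a' * Real.exp (η * f t s a'))
    (Q : ℕ → S → A → ℝ) (hQ : ∀ t ∈ Finset.Icc 1 T, M.IsQ (π t) (Q t))
    (πe Qe : S → A → ℝ) (hπe : IsPolicy πe) (hQe : M.IsQ πe Qe)
    (Δon C : ℝ) (hC : 0 ≤ C)
    (hon : ∀ t ∈ Finset.Icc 1 T,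
      ∑ s, ∑ a, M.occ (π t) s a * (f t s a - Q t s a) ^ 2 ≤ Δon)
    (hcov : ∀ t ∈ Finset.Icc 1 T, ∀ s a, M.occ πe s a ≤ C * M.occ (π t) s a) :
    ∑ t ∈ Finset.Icc 1 T, (M.scalarV πe Qe - M.scalarV (π t) (Q t))
      ≤ (2 / (1 - M.disc) ^ 2) * Real.sqrt (Real.log (Fintype.card A) * T)
        + (2 * T / (1 - M.disc)) * Real.sqrt (C * Δon) := by
  classical
  have hγ1 : M.disc < 1 := M.disc_lt_one
  have h1γ : (0:ℝ) < 1 - M.disc := by linarith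
  have hA1 : (1:ℝ) < (Fintype.card A : ℝ) := by exact_mod_cast lt_of_lt_of_le one_lt_two hA
  have hlogA : 0 < Real.log (Fintype.card A) := Real.log_pos hA1
  have hT0 : (0:ℝ) < (T:ℝ) := lt_of_lt_of_le (by positivity) hT
  have hη0 : 0 < η := by
    rw [hη]; exact mul_pos h1γ (Real.sqrt_pos.2 (div_pos hlogA hT0))
  have hB0 : (0:ℝ) ≤ 1 / (1 - M.disc) := by positivity
  have hηB : η * (1 / (1 - M.disc)) ≤ 1 := by
    have h1 : η * (1 / (1 - M.disc)) = Real.sqrt (Real.log (Fintype.card A) / T) := by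
      rw [hη]; field_simp
    rw [h1]
    have h2 : Real.log (Fintype.card A) / T ≤ 1 := by
      rw [div_le_one hT0]; linarith
    calc Real.sqrt (Real.log (Fintype.card A) / T) ≤ Real.sqrt 1 := Real.sqrt_le_sqrt h2
      _ = 1 := Real.sqrt_one
  -- policies
  have hπt : ∀ t ∈ Finset.Icc 1 T, IsPolicy (π t) := by
    intro t ht
    obtain ⟨ht1, ht2⟩ := Finset.mem_Icc.1 ht
    constructor
    · intro s a
      exact (hedge_policy T η (fun u b => f u s b) (fun u b => π u s b)
        (fun a => hπ1 s a) (fun u hu1 hu2 a => hupd u hu1 hu2 s a) t ht1 ht2).1 a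
    · intro s
      exact (hedge_policy T η (fun u b => f u s b) (fun u b => π u s b)
        (fun a => hπ1 s a) (fun u hu1 hu2 a => hupd u hu1 hu2 s a) t ht1 ht2).2
  -- regret per state
  have hreg : ∀ s : S, ∑ t ∈ Finset.Icc 1 T, ∑ a, (πe s a - π t s a) * f t s a
      ≤ Real.log (Fintype.card A) / η + η * T * (1 / (1 - M.disc)) ^ 2 := by
    intro s
    exact hedge_regret T η (1 / (1 - M.disc)) hη0 hB0 hηB (fun u b => f u s b)
      (fun u hu a => ⟨(hfmem u hu s a).1, (hfmem u hu s a).2⟩)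
      (fun u b => π u s b) (fun a => hπ1 s a)
      (fun u hu1 hu2 a => hupd u hu1 hu2 s a) (πe s) (fun a => hπe.1 s a) (hπe.2 s)
  have hwE0 : ∀ s, 0 ≤ sdist M πe s := sdist_nonneg M hπe.1
  -- state-marginal coverage
  have hcovS : ∀ t ∈ Finset.Icc 1 T, ∀ s, sdist M πe s ≤ C * sdist M (π t) s := by
    intro t ht s
    have hpt := hπt t ht
    have h1 : ∑ a, M.occ πe s a ≤ ∑ a, C * M.occ (π t) s a :=
      Finset.sum_le_sum fun a _ => hcov t ht s a
    have h2 : ∑ a, M.occ πe s a = (1 - M.disc) * sdist M πe s := by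
      rw [Finset.sum_congr rfl fun a _ => occ_eq M πe s a, ← Finset.mul_sum, hπe.2 s, mul_one]
    have h3 : ∑ a, C * M.occ (π t) s a = (1 - M.disc) * (C * sdist M (π t) s) := by
      have e : ∀ a, C * M.occ (π t) s a
          = ((1 - M.disc) * (C * sdist M (π t) s)) * π t s a := fun a => by
        rw [occ_eq]; ring
      rw [Finset.sum_congr rfl fun a _ => e a, ← Finset.mul_sum, hpt.2 s, mul_one]
    rw [h2, h3] at h1
    exact le_of_mul_le_mul_left h1 h1γ
  -- first error term
  have hAbound : ∀ t ∈ Finset.Icc 1 T,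
      ∑ s, sdist M πe s * (∑ a, πe s a * (Q t s a - f t s a))
        ≤ (1 / (1 - M.disc)) * Real.sqrt (C * Δon) := by
    intro t ht
    have hrw : ∑ s, sdist M πe s * (∑ a, πe s a * (Q t s a - f t s a))
        = (1 / (1 - M.disc)) * ∑ s, ∑ a,
            ((1 - M.disc) * sdist M πe s * πe s a) * (Q t s a - f t s a) := by
      rw [Finset.mul_sum]
      refine Finset.sum_congr rfl fun s _ => ?_
      rw [Finset.mul_sum, Finset.mul_sum]
      refine Finset.sum_congr rfl fun a _ => ?_
      field_simp
    rw [hrw]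
    refine mul_le_mul_of_nonneg_left ?_ hB0
    refine cs_aux2 _ _
      (fun s a => mul_nonneg (mul_nonneg h1γ.le (hwE0 s)) (hπe.1 s a)) ?_ ?_
    · have e : ∀ s, ∑ a, (1 - M.disc) * sdist M πe s * πe s a
          = (1 - M.disc) * sdist M πe s := by
        intro s; rw [← Finset.mul_sum, hπe.2 s, mul_one]
      rw [Finset.sum_congr rfl fun s _ => e s, ← Finset.mul_sum, sdist_sum M hπe]
      field_simp
    · calc ∑ s, ∑ a, ((1 - M.disc) * sdist M πe s * πe s a) * (Q t s a - f t s a) ^ 2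
          ≤ ∑ s, ∑ a, C * (M.occ (π t) s a * (f t s a - Q t s a) ^ 2) := by
            refine Finset.sum_le_sum fun s _ => Finset.sum_le_sum fun a _ => ?_
            have e1 : ((1 - M.disc) * sdist M πe s * πe s a) * (Q t s a - f t s a) ^ 2
                = M.occ πe s a * (f t s a - Q t s a) ^ 2 := by rw [occ_eq]; ring
            rw [e1]
            calc M.occ πe s a * (f t s a - Q t s a) ^ 2
                ≤ (C * M.occ (π t) s a) * (f t s a - Q t s a) ^ 2 :=
                  mul_le_mul_of_nonneg_right (hcov t ht s a) (sq_nonneg _)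
              _ = C * (M.occ (π t) s a * (f t s a - Q t s a) ^ 2) := by ring
        _ ≤ C * Δon := by
            rw [show ∑ s, ∑ a, C * (M.occ (π t) s a * (f t s a - Q t s a) ^ 2)
                = C * ∑ s, ∑ a, M.occ (π t) s a * (f t s a - Q t s a) ^ 2 by
              simp only [Finset.mul_sum]]
            exact mul_le_mul_of_nonneg_left (hon t ht) hC
  -- third error term
  have hCbound : ∀ t ∈ Finset.Icc 1 T,
      ∑ s, sdist M πe s * (∑ a, π t s a * (f t s a - Q t s a))
        ≤ (1 / (1 - M.disc)) * Real.sqrt (C * Δon) := by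
    intro t ht
    have hpt := hπt t ht
    have hrw : ∑ s, sdist M πe s * (∑ a, π t s a * (f t s a - Q t s a))
        = (1 / (1 - M.disc)) * ∑ s, ∑ a,
            ((1 - M.disc) * sdist M πe s * π t s a) * (f t s a - Q t s a) := by
      rw [Finset.mul_sum]
      refine Finset.sum_congr rfl fun s _ => ?_
      rw [Finset.mul_sum, Finset.mul_sum]
      refine Finset.sum_congr rfl fun a _ => ?_
      field_simp
    rw [hrw]
    refine mul_le_mul_of_nonneg_left ?_ hB0
    refine cs_aux2 _ _
      (fun s a => mul_nonneg (mul_nonneg h1γ.le (hwE0 s)) (hpt.1 s a)) ?_ ?_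
    · have e : ∀ s, ∑ a, (1 - M.disc) * sdist M πe s * π t s a
          = (1 - M.disc) * sdist M πe s := by
        intro s; rw [← Finset.mul_sum, hpt.2 s, mul_one]
      rw [Finset.sum_congr rfl fun s _ => e s, ← Finset.mul_sum, sdist_sum M hπe]
      field_simp
    · calc ∑ s, ∑ a, ((1 - M.disc) * sdist M πe s * π t s a) * (f t s a - Q t s a) ^ 2
          ≤ ∑ s, ∑ a, C * (M.occ (π t) s a * (f t s a - Q t s a) ^ 2) := by
            refine Finset.sum_le_sum fun s _ => Finset.sum_le_sum fun a _ => ?_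
            have hws : (1 - M.disc) * sdist M πe s * π t s a
                ≤ C * M.occ (π t) s a := by
              rw [occ_eq]
              nlinarith [mul_nonneg (sub_nonneg.2 (hcovS t ht s))
                (mul_nonneg h1γ.le (hpt.1 s a)), hcovS t ht s, hpt.1 s a, h1γ.le,
                hwE0 s]
            calc ((1 - M.disc) * sdist M πe s * π t s a) * (f t s a - Q t s a) ^ 2
                ≤ (C * M.occ (π t) s a) * (f t s a - Q t s a) ^ 2 :=
                  mul_le_mul_of_nonneg_right hws (sq_nonneg _)
              _ = C * (M.occ (π t) s a * (f t s a - Q t s a) ^ 2) := by ring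
        _ ≤ C * Δon := by
            rw [show ∑ s, ∑ a, C * (M.occ (π t) s a * (f t s a - Q t s a) ^ 2)
                = C * ∑ s, ∑ a, M.occ (π t) s a * (f t s a - Q t s a) ^ 2 by
              simp only [Finset.mul_sum]]
            exact mul_le_mul_of_nonneg_left (hon t ht) hC
  -- middle (regret) term summed over t
  have hBsum : ∑ t ∈ Finset.Icc 1 T,
      ∑ s, sdist M πe s * (∑ a, (πe s a - π t s a) * f t s a)
      ≤ (1 / (1 - M.disc)) * (Real.log (Fintype.card A) / η + η * T * (1 / (1 - M.disc)) ^ 2) := by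
    rw [Finset.sum_comm]
    calc ∑ s, ∑ t ∈ Finset.Icc 1 T, sdist M πe s * (∑ a, (πe s a - π t s a) * f t s a)
        = ∑ s, sdist M πe s * ∑ t ∈ Finset.Icc 1 T, ∑ a, (πe s a - π t s a) * f t s a := by
          refine Finset.sum_congr rfl fun s _ => ?_
          rw [Finset.mul_sum]
      _ ≤ ∑ s, sdist M πe s
            * (Real.log (Fintype.card A) / η + η * T * (1 / (1 - M.disc)) ^ 2) :=
          Finset.sum_le_sum fun s _ => mul_le_mul_of_nonneg_left (hreg s) (hwE0 s)
      _ = (1 / (1 - M.disc))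
            * (Real.log (Fintype.card A) / η + η * T * (1 / (1 - M.disc)) ^ 2) := by
          rw [← Finset.sum_mul, sdist_sum M hπe]
  -- decomposition
  have hdecomp : ∀ t ∈ Finset.Icc 1 T,
      M.scalarV πe Qe - M.scalarV (π t) (Q t)
        = (∑ s, sdist M πe s * (∑ a, πe s a * (Q t s a - f t s a)))
          + (∑ s, sdist M πe s * (∑ a, (πe s a - π t s a) * f t s a))
          + (∑ s, sdist M πe s * (∑ a, π t s a * (f t s a - Q t s a))) := by
    intro t ht
    rw [pdl M hπe hQe (hQ t ht), ← Finset.sum_add_distrib, ← Finset.sum_add_distrib]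
    refine Finset.sum_congr rfl fun s _ => ?_
    have key : (∑ a, πe s a * Q t s a) - (∑ a, π t s a * Q t s a)
        = (∑ a, πe s a * (Q t s a - f t s a)) + (∑ a, (πe s a - π t s a) * f t s a)
          + (∑ a, π t s a * (f t s a - Q t s a)) := by
      rw [← Finset.sum_add_distrib, ← Finset.sum_add_distrib, ← Finset.sum_sub_distrib]
      exact Finset.sum_congr rfl fun a _ => by ring
    calc sdist M πe s * ((∑ a, πe s a * Q t s a) - vOf (π t) (Q t) s)
        = sdist M πe s * ((∑ a, πe s a * Q t s a) - (∑ a, π t s a * Q t s a)) := rfl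
      _ = _ := by rw [key]; ring
  -- key arithmetic identity
  have hkey : Real.log (Fintype.card A) / η + η * T * (1 / (1 - M.disc)) ^ 2
      = 2 * Real.sqrt (Real.log (Fintype.card A) * T) / (1 - M.disc) := by
    have hx : Real.sqrt (Real.log (Fintype.card A)) ^ 2 = Real.log (Fintype.card A) :=
      Real.sq_sqrt hlogA.le
    have hy : Real.sqrt (T : ℝ) ^ 2 = (T : ℝ) := Real.sq_sqrt hT0.le
    have hx0 : 0 < Real.sqrt (Real.log (Fintype.card A)) := Real.sqrt_pos.2 hlogA
    have hy0 : 0 < Real.sqrt (T : ℝ) := Real.sqrt_pos.2 hT0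
    have hηeq : η = (1 - M.disc)
        * (Real.sqrt (Real.log (Fintype.card A)) / Real.sqrt T) := by
      rw [hη, Real.sqrt_div hlogA.le]
    have hmul : Real.sqrt (Real.log (Fintype.card A) * T)
        = Real.sqrt (Real.log (Fintype.card A)) * Real.sqrt T :=
      Real.sqrt_mul hlogA.le _
    rw [hmul, hηeq]
    set x := Real.sqrt (Real.log (Fintype.card A)) with hxdef
    set y := Real.sqrt (T : ℝ) with hydef
    rw [← hx, ← hy]
    field_simp
    ring
  -- final assembly
  have hsum : ∑ t ∈ Finset.Icc 1 T, (M.scalarV πe Qe - M.scalarV (π t) (Q t))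
      = (∑ t ∈ Finset.Icc 1 T, ∑ s, sdist M πe s * (∑ a, πe s a * (Q t s a - f t s a)))
        + (∑ t ∈ Finset.Icc 1 T, ∑ s, sdist M πe s * (∑ a, (πe s a - π t s a) * f t s a))
        + (∑ t ∈ Finset.Icc 1 T, ∑ s, sdist M πe s * (∑ a, π t s a * (f t s a - Q t s a))) := by
    rw [← Finset.sum_add_distrib, ← Finset.sum_add_distrib]
    exact Finset.sum_congr rfl hdecomp
  have hTcard : (Finset.Icc 1 T).card = T := by
    rw [Nat.card_Icc]; omega
  have hAsum : ∑ t ∈ Finset.Icc 1 T,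
      ∑ s, sdist M πe s * (∑ a, πe s a * (Q t s a - f t s a))
      ≤ T * ((1 / (1 - M.disc)) * Real.sqrt (C * Δon)) := by
    calc ∑ t ∈ Finset.Icc 1 T, ∑ s, sdist M πe s * (∑ a, πe s a * (Q t s a - f t s a))
        ≤ ∑ t ∈ Finset.Icc 1 T, (1 / (1 - M.disc)) * Real.sqrt (C * Δon) :=
          Finset.sum_le_sum hAbound
      _ = T * ((1 / (1 - M.disc)) * Real.sqrt (C * Δon)) := by
          rw [Finset.sum_const, hTcard, nsmul_eq_mul]
  have hCsum : ∑ t ∈ Finset.Icc 1 T,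
      ∑ s, sdist M πe s * (∑ a, π t s a * (f t s a - Q t s a))
      ≤ T * ((1 / (1 - M.disc)) * Real.sqrt (C * Δon)) := by
    calc ∑ t ∈ Finset.Icc 1 T, ∑ s, sdist M πe s * (∑ a, π t s a * (f t s a - Q t s a))
        ≤ ∑ t ∈ Finset.Icc 1 T, (1 / (1 - M.disc)) * Real.sqrt (C * Δon) :=
          Finset.sum_le_sum hCbound
      _ = T * ((1 / (1 - M.disc)) * Real.sqrt (C * Δon)) := by
          rw [Finset.sum_const, hTcard, nsmul_eq_mul]
  rw [hsum]
  have hfin : (1 / (1 - M.disc))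
      * (Real.log (Fintype.card A) / η + η * T * (1 / (1 - M.disc)) ^ 2)
      = (2 / (1 - M.disc) ^ 2) * Real.sqrt (Real.log (Fintype.card A) * T) := by
    rw [hkey]
    field_simp
  calc _ ≤ T * ((1 / (1 - M.disc)) * Real.sqrt (C * Δon))
        + (1 / (1 - M.disc))
          * (Real.log (Fintype.card A) / η + η * T * (1 / (1 - M.disc)) ^ 2)
        + T * ((1 / (1 - M.disc)) * Real.sqrt (C * Δon)) :=
        add_le_add (add_le_add hAsum hBsum) hCsum
    _ = (2 / (1 - M.disc) ^ 2) * Real.sqrt (Real.log (Fintype.card A) * T)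
        + (2 * T / (1 - M.disc)) * Real.sqrt (C * Δon) := by
        rw [hfin]
        ring
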